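/- arXiv:2603.10981 — 3 statements merged into one kernel-verified Lean document; each statement's English description precedes it below -/
import Mathlib

section
/- For any t ∈ {1,...,n} and composition μ of t into q parts with λ - μ ≥ 0 entrywise, the composition of deletion operators E^q_μ = (χ_{q-1})^{μ_{q-1}} ∘ ⋯ ∘ (χ_0)^{μ_0} acts on a Dicke state as E^q_μ |D^n_λ⟩ = √( (n-t choose λ - μ) / (n choose λ) ) |D^{n-t}_{λ - μ}⟩; the result is zero if λ - μ has a negative entry. -/
open Finset

/-- Dicke state `|D^n_λ⟩` in the list model (zero vector if `∑ λ ≠ n`,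
implementing the convention that ill-formed Dicke states vanish). -/
noncomputable def dicke (q n : ℕ) (lam : Fin q → ℕ) : List (Fin q) → ℂ :=
  fun x => if x.length = n ∧ ∀ i, x.count i = lam i
    then ((Real.sqrt (Nat.multinomial Finset.univ lam) : ℝ) : ℂ)⁻¹ else 0

/-- A `k`-type deletion operator `χ_k` (acting on the first position; the
position is irrelevant on permutation-invariant states). -/
def chi (q : ℕ) (k : Fin q) (ψ : List (Fin q) → ℂ) : List (Fin q) → ℂ :=
  fun y => ψ (k :: y)

/-- The deletion error `E^q_μ = (χ_{q-1})^{μ_{q-1}} ∘ ⋯ ∘ (χ_0)^{μ_0}`. -/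
def Edel (q : ℕ) (mu : Fin q → ℕ) : (List (Fin q) → ℂ) → List (Fin q) → ℂ :=
  (List.finRange q).foldl (fun F k => (chi q k)^[mu k] ∘ F) id

lemma chi_iterate (q : ℕ) (k : Fin q) (m : ℕ) (ψ : List (Fin q) → ℂ) (y : List (Fin q)) :
    (chi q k)^[m] ψ y = ψ (List.replicate m k ++ y) := by
  induction m generalizing ψ y with
  | zero => simp
  | succ m ih =>
    rw [Function.iterate_succ_apply]
    simp [ih, chi, List.replicate_succ]

lemma foldl_chi (q : ℕ) (mu : Fin q → ℕ) (l : List (Fin q))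
    (F : (List (Fin q) → ℂ) → (List (Fin q) → ℂ)) (ψ : List (Fin q) → ℂ) (y : List (Fin q)) :
    (l.foldl (fun F k => (chi q k)^[mu k] ∘ F) F) ψ y
      = F ψ (l.flatMap (fun k => List.replicate (mu k) k) ++ y) := by
  induction l generalizing F y with
  | nil => simp
  | cons k l ih =>
    rw [List.foldl_cons, ih]
    simp [chi_iterate]

lemma Edel_apply (q : ℕ) (mu : Fin q → ℕ) (ψ : List (Fin q) → ℂ) (y : List (Fin q)) :
    Edel q mu ψ y
      = ψ ((List.finRange q).flatMap (fun k => List.replicate (mu k) k) ++ y) := by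
  rw [Edel, foldl_chi]; rfl

lemma count_P (q : ℕ) (mu : Fin q → ℕ) (i : Fin q) :
    ((List.finRange q).flatMap (fun k => List.replicate (mu k) k)).count i = mu i := by
  rw [List.count_flatMap]
  have : ∀ k : Fin q, (List.count i ∘ fun k => List.replicate (mu k) k) k
      = if k = i then mu i else 0 := by
    intro k
    simp only [Function.comp, List.count_replicate]
    split_ifs with h1 h2 h2 <;> simp_all
  rw [List.map_congr_left (fun k _ => this k)]
  rw [← Fin.sum_univ_def]
  simp

lemma length_P (q : ℕ) (mu : Fin q → ℕ) :
    ((List.finRange q).flatMap (fun k => List.replicate (mu k) k)).length = ∑ i, mu i := by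
  rw [List.length_flatMap, ← Fin.sum_univ_def]
  simp

/-- for `μ ⊢_q t` with `1 ≤ t ≤ n` and `λ - μ ≥ 0` entrywise,
`E^q_μ |D^n_λ⟩ = √((n-t choose λ-μ)/(n choose λ)) |D^{n-t}_{λ-μ}⟩`, and the
result is zero if `λ - μ` has a negative entry. -/
theorem Edel_on_dicke (q t n : ℕ) (ht1 : 1 ≤ t) (htn : t ≤ n)
    (lam mu : Fin q → ℕ) (hlam : ∑ i, lam i = n) (hmu : ∑ i, mu i = t) :
    ((∀ k, mu k ≤ lam k) →
      Edel q mu (dicke q n lam) =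
        ((Real.sqrt ((Nat.multinomial Finset.univ (fun m => lam m - mu m) : ℝ) /
            (Nat.multinomial Finset.univ lam : ℝ)) : ℝ) : ℂ) •
          dicke q (n - t) (fun m => lam m - mu m))
    ∧ ((∃ k, lam k < mu k) → Edel q mu (dicke q n lam) = 0) := by
  set P := (List.finRange q).flatMap (fun k => List.replicate (mu k) k) with hP
  have hPlen : P.length = t := by rw [hP, length_P, hmu]
  have hPcount : ∀ i, P.count i = mu i := fun i => count_P q mu i
  constructor
  · intro hle
    funext y
    rw [Edel_apply]
    have hiff : ((P ++ y).length = n ∧ ∀ i, (P ++ y).count i = lam i)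
        ↔ (y.length = n - t ∧ ∀ i, y.count i = lam i - mu i) := by
      constructor
      · rintro ⟨h1, h2⟩
        constructor
        · rw [List.length_append, hPlen] at h1; omega
        · intro i
          have := h2 i
          rw [List.count_append, hPcount] at this
          omega
      · rintro ⟨h1, h2⟩
        constructor
        · rw [List.length_append, hPlen, h1]; omega
        · intro i
          rw [List.count_append, hPcount, h2 i]
          have := hle i; omega
    simp only [dicke, Pi.smul_apply, smul_eq_mul, ← hP]
    simp only [hiff]
    by_cases h : (y.length = n - t ∧ ∀ i, y.count i = lam i - mu i)
    · rw [if_pos h, if_pos h]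
      have hM : (0:ℝ) < (Nat.multinomial Finset.univ lam : ℝ) := by
        exact_mod_cast Nat.multinomial_pos _ _
      have hM' : (0:ℝ) < (Nat.multinomial Finset.univ (fun m => lam m - mu m) : ℝ) := by
        exact_mod_cast Nat.multinomial_pos _ _
      rw [← Complex.ofReal_inv, ← Complex.ofReal_inv, ← Complex.ofReal_mul]
      congr 1
      rw [Real.sqrt_div hM'.le]
      field_simp
    · rw [if_neg h, if_neg h, mul_zero]
  · rintro ⟨k, hk⟩
    funext y
    rw [Edel_apply]
    have : ¬ ((P ++ y).length = n ∧ ∀ i, (P ++ y).count i = lam i) := by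
      rintro ⟨-, h2⟩
      have := h2 k
      rw [List.count_append, hPcount] at this
      omega
    simp only [dicke, ← hP, if_neg this, Pi.zero_apply]
end

section
/- Let γ_{i,λ} (for i ∈ [D_L], λ a composition of n into 2 parts) be codeword coefficients of a qudit PI code on qubits satisfying the qudit Knill–Laflamme conditions C1–C3 with parameters (n, D_L, d) and physical dimension 2. Define padded coefficients for physical dimension D_P ≥ 2 by α_{i,λ} = γ_{i,(λ_0,λ_1)} when λ = (λ_0,λ_1,0,...,0) and α_{i,λ} = 0 otherwise. Then the α_{i,λ} satisfy the qudit KL conditions C1–C3 with the same parameters (n, D_L, d) and physical dimension D_P. -/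
open Finset

/-- The set of compositions of `n` into `D` (nonnegative) parts. -/
def comps (D n : ℕ) : Finset (Fin D → ℕ) :=
  (Fintype.piFinset fun _ : Fin D => Finset.range (n + 1)).filter fun lam => ∑ i, lam i = n

/-- The coefficient `(n-2t choose λ-μ)/√((n choose λ)(n choose λ-μ+ν))` appearing
in the qudit Knill–Laflamme conditions, with the convention that it is zero if any
multinomial coefficient would contain factorials of negative numbers (i.e. if
`λ - μ` has a negative entry). -/
noncomputable def qklCoeff (D n t : ℕ) (lam mu nu : Fin D → ℕ) : ℝ :=
  if ∀ k, mu k ≤ lam k then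
    (Nat.multinomial Finset.univ (fun k => lam k - mu k) : ℝ) /
      Real.sqrt ((Nat.multinomial Finset.univ lam : ℝ) *
        (Nat.multinomial Finset.univ (fun k => lam k - mu k + nu k) : ℝ))
  else 0

/-- The qudit Knill–Laflamme conditions C1–C3 for a PI code with block length `n`,
logical dimension `DL`, physical dimension `D`, error weight `t`, and codeword
coefficients `α i λ` for `i ∈ [DL]`, `λ ⊢_D n`. -/
def KLqudit (D n DL t : ℕ) (α : Fin DL → (Fin D → ℕ) → ℂ) : Prop :=
  (∀ i j : Fin DL,
    ∑ lam ∈ comps D n, (starRingEnd ℂ) (α i lam) * α j lam = if i = j then 1 else 0)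
  ∧ (∀ i j : Fin DL, i ≠ j → ∀ mu ∈ comps D (2 * t), ∀ nu ∈ comps D (2 * t),
      ∑ lam ∈ comps D n,
        (qklCoeff D n t lam mu nu : ℂ) * (starRingEnd ℂ) (α i lam) *
          α j (fun k => lam k - mu k + nu k) = 0)
  ∧ (∀ i j : Fin DL, ∀ mu ∈ comps D (2 * t), ∀ nu ∈ comps D (2 * t),
      ∑ lam ∈ comps D n,
        (qklCoeff D n t lam mu nu : ℂ) *
          ((starRingEnd ℂ) (α i lam) * α i (fun k => lam k - mu k + nu k) -
            (starRingEnd ℂ) (α j lam) * α j (fun k => lam k - mu k + nu k)) = 0)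

section Pad

variable {DP : ℕ}

/-- Pad a 2-part composition with zeros to a `DP`-part composition. -/
def pad (hDP : 2 ≤ DP) (lam : Fin 2 → ℕ) : Fin DP → ℕ :=
  fun k => if h : (k : ℕ) < 2 then lam ⟨(k : ℕ), h⟩ else 0

lemma pad_castLE (hDP : 2 ≤ DP) (lam : Fin 2 → ℕ) (b : Fin 2) :
    pad hDP lam (Fin.castLE hDP b) = lam b := by
  simp [pad, b.isLt]

lemma restrict_pad (hDP : 2 ≤ DP) (lam : Fin 2 → ℕ) :
    (fun b : Fin 2 => pad hDP lam (Fin.castLE hDP b)) = lam := by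
  funext b; exact pad_castLE hDP lam b

lemma pad_supp (hDP : 2 ≤ DP) (lam : Fin 2 → ℕ) (k : Fin DP) (hk : 2 ≤ (k : ℕ)) :
    pad hDP lam k = 0 := by
  simp [pad, Nat.not_lt.mpr hk]

lemma pad_injective (hDP : 2 ≤ DP) : Function.Injective (pad hDP) := by
  intro a b h
  have := congrArg (fun f => fun c : Fin 2 => f (Fin.castLE hDP c)) h
  simpa [restrict_pad] using this

lemma supp_eq_pad (hDP : 2 ≤ DP) (m : Fin DP → ℕ)
    (h : ∀ k : Fin DP, 2 ≤ (k : ℕ) → m k = 0) :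
    m = pad hDP (fun b => m (Fin.castLE hDP b)) := by
  funext k
  by_cases hk : (k : ℕ) < 2
  · have : Fin.castLE hDP ⟨(k : ℕ), hk⟩ = k := Fin.ext rfl
    simp [pad, hk, this]
  · simp [pad, hk, h k (Nat.not_lt.mp hk)]

lemma filter_lt_two_eq_image (hDP : 2 ≤ DP) :
    (univ.filter fun k : Fin DP => (k : ℕ) < 2) = Finset.image (Fin.castLE hDP) univ := by
  ext k
  simp only [mem_filter, mem_univ, true_and, mem_image]
  constructor
  · intro h; exact ⟨⟨(k : ℕ), h⟩, Fin.ext rfl⟩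
  · rintro ⟨b, -, rfl⟩; exact b.isLt

lemma pad_prod (hDP : 2 ≤ DP) {M : Type*} [CommMonoid M] (g : ℕ → M) (hg : g 0 = 1)
    (lam : Fin 2 → ℕ) :
    ∏ k : Fin DP, g (pad hDP lam k) = ∏ b : Fin 2, g (lam b) := by
  calc ∏ k : Fin DP, g (pad hDP lam k)
      = ∏ k ∈ univ.filter (fun k : Fin DP => (k : ℕ) < 2), g (pad hDP lam k) := by
        refine (Finset.prod_filter_of_ne (f := fun k => g (pad hDP lam k))
          (p := fun k : Fin DP => (k : ℕ) < 2) ?_).symm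
        intro k _ hne
        by_contra hk
        exact hne (by rw [pad_supp hDP lam k (Nat.not_lt.mp hk)]; exact hg)
    _ = ∏ b : Fin 2, g (pad hDP lam (Fin.castLE hDP b)) := by
        rw [filter_lt_two_eq_image hDP,
          Finset.prod_image (fun a _ b _ h => Fin.castLE_injective hDP h)]
    _ = ∏ b, g (lam b) := by simp [pad_castLE]

lemma pad_sum (hDP : 2 ≤ DP) (lam : Fin 2 → ℕ) :
    ∑ k : Fin DP, pad hDP lam k = ∑ b : Fin 2, lam b := by
  calc ∑ k : Fin DP, pad hDP lam k
      = ∑ k ∈ univ.filter (fun k : Fin DP => (k : ℕ) < 2), pad hDP lam k := by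
        refine (Finset.sum_filter_of_ne (f := fun k => pad hDP lam k)
          (p := fun k : Fin DP => (k : ℕ) < 2) ?_).symm
        intro k _ hne
        by_contra hk
        exact hne (by exact pad_supp hDP lam k (Nat.not_lt.mp hk))
    _ = ∑ b : Fin 2, pad hDP lam (Fin.castLE hDP b) := by
        rw [filter_lt_two_eq_image hDP,
          Finset.sum_image (fun a _ b _ h => Fin.castLE_injective hDP h)]
    _ = ∑ b, lam b := by simp [pad_castLE]

lemma pad_multinomial (hDP : 2 ≤ DP) (lam : Fin 2 → ℕ) :
    Nat.multinomial univ (pad hDP lam) = Nat.multinomial univ lam := by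
  unfold Nat.multinomial
  rw [pad_sum hDP lam, pad_prod hDP (fun m => Nat.factorial m) (by simp) lam]

lemma pad_sub (hDP : 2 ≤ DP) (lam mu : Fin 2 → ℕ) :
    (fun k => pad hDP lam k - pad hDP mu k) = pad hDP (fun b => lam b - mu b) := by
  funext k
  by_cases hk : (k : ℕ) < 2 <;> simp [pad, hk]

lemma pad_sub_add (hDP : 2 ≤ DP) (lam mu nu : Fin 2 → ℕ) :
    (fun k => pad hDP lam k - pad hDP mu k + pad hDP nu k)
      = pad hDP (fun b => lam b - mu b + nu b) := by
  funext k
  by_cases hk : (k : ℕ) < 2 <;> simp [pad, hk]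

lemma qklCoeff_pad (hDP : 2 ≤ DP) (n t : ℕ) (lam mu nu : Fin 2 → ℕ) :
    qklCoeff DP n t (pad hDP lam) (pad hDP mu) (pad hDP nu) = qklCoeff 2 n t lam mu nu := by
  unfold qklCoeff
  have hcond : (∀ k : Fin DP, pad hDP mu k ≤ pad hDP lam k) ↔ ∀ b : Fin 2, mu b ≤ lam b := by
    constructor
    · intro h b
      have := h (Fin.castLE hDP b)
      simpa [pad_castLE] using this
    · intro h k
      by_cases hk : (k : ℕ) < 2 <;> simp [pad, hk, h]
  by_cases hc : ∀ b : Fin 2, mu b ≤ lam b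
  · rw [if_pos (hcond.mpr hc), if_pos hc, pad_sub hDP lam mu, pad_sub_add hDP lam mu nu,
      pad_multinomial hDP, pad_multinomial hDP, pad_multinomial hDP]
  · rw [if_neg (fun h => hc (hcond.mp h)), if_neg hc]

lemma mem_comps_iff {D n : ℕ} {lam : Fin D → ℕ} :
    lam ∈ comps D n ↔ (∀ i, lam i ≤ n) ∧ ∑ i, lam i = n := by
  simp [comps, Fintype.mem_piFinset, Nat.lt_succ_iff]

lemma pad_mem_comps (hDP : 2 ≤ DP) {n : ℕ} {lam : Fin 2 → ℕ} (h : lam ∈ comps 2 n) :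
    pad hDP lam ∈ comps DP n := by
  rw [mem_comps_iff] at h ⊢
  refine ⟨fun k => ?_, by rw [pad_sum hDP lam]; exact h.2⟩
  by_cases hk : (k : ℕ) < 2
  · simpa [pad, hk] using h.1 ⟨(k : ℕ), hk⟩
  · simp [pad, hk]

lemma mem_comps_of_pad_mem (hDP : 2 ≤ DP) {n : ℕ} {lam : Fin 2 → ℕ}
    (h : pad hDP lam ∈ comps DP n) : lam ∈ comps 2 n := by
  rw [mem_comps_iff] at h ⊢
  refine ⟨fun b => ?_, by rw [← pad_sum hDP lam]; exact h.2⟩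
  have := h.1 (Fin.castLE hDP b)
  rwa [pad_castLE] at this

lemma sum_comps_pad (hDP : 2 ≤ DP) {n : ℕ} (F : (Fin DP → ℕ) → ℂ)
    (hF : ∀ m ∈ comps DP n, (¬ ∀ k : Fin DP, 2 ≤ (k : ℕ) → m k = 0) → F m = 0) :
    ∑ m ∈ comps DP n, F m = ∑ lam ∈ comps 2 n, F (pad hDP lam) := by
  rw [← Finset.sum_image (g := pad hDP) (s := comps 2 n)
      (fun a _ b _ h => pad_injective hDP h)]
  refine (Finset.sum_subset ?_ ?_).symm
  · intro m hm
    rcases mem_image.mp hm with ⟨lam, hl, rfl⟩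
    exact pad_mem_comps hDP hl
  · intro m hm hnot
    refine hF m hm fun hsupp => hnot ?_
    refine mem_image.mpr ⟨_, mem_comps_of_pad_mem hDP ?_, (supp_eq_pad hDP m hsupp).symm⟩
    rw [← supp_eq_pad hDP m hsupp]; exact hm

end Pad

/-- a qudit PI code on physical qubits satisfying the qudit KL
conditions with parameters `(n, DL, d)` can be padded (by setting all coefficients
on compositions with support beyond the first two levels to zero) to a qudit PI
code on physical qudits of any dimension `D_P ≥ 2` satisfying the qudit KL
conditions with the same parameters. -/
theorem padding_preserves_KL (n DL d t DP : ℕ) (hDP : 2 ≤ DP)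
    (ht : t = (d - 1) / 2) (hn : 2 * t ≤ n)
    (γ : Fin DL → (Fin 2 → ℕ) → ℂ) (hγ : KLqudit 2 n DL t γ) :
    KLqudit DP n DL t (fun i lam =>
      if ∀ k : Fin DP, 2 ≤ (k : ℕ) → lam k = 0
      then γ i (fun b : Fin 2 => lam (Fin.castLE hDP b)) else 0) := by
  set α : Fin DL → (Fin DP → ℕ) → ℂ := fun i lam =>
    if ∀ k : Fin DP, 2 ≤ (k : ℕ) → lam k = 0
    then γ i (fun b : Fin 2 => lam (Fin.castLE hDP b)) else 0 with hαdef
  have hα : ∀ (i : Fin DL) (lam : Fin 2 → ℕ), α i (pad hDP lam) = γ i lam := by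
    intro i lam
    rw [hαdef]
    simp only
    rw [if_pos (pad_supp hDP lam), restrict_pad]
  have hα0 : ∀ (i : Fin DL) (m : Fin DP → ℕ),
      (¬ ∀ k : Fin DP, 2 ≤ (k : ℕ) → m k = 0) → α i m = 0 := by
    intro i m hm
    rw [hαdef]
    exact if_neg hm
  obtain ⟨h1, h2, h3⟩ := hγ
  refine ⟨?_, ?_, ?_⟩
  · -- C1
    intro i j
    rw [sum_comps_pad hDP _ (fun m _ hm => by simp [hα0 i m hm])]
    simp only [hα]
    exact h1 i j
  · -- C2
    intro i j hij mu hmu nu hnu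
    by_cases hmus : ∀ k : Fin DP, 2 ≤ (k : ℕ) → mu k = 0
    · by_cases hnus : ∀ k : Fin DP, 2 ≤ (k : ℕ) → nu k = 0
      · -- both supported on first two levels
        rw [supp_eq_pad hDP mu hmus] at hmu ⊢
        rw [supp_eq_pad hDP nu hnus] at hnu ⊢
        set mu' := fun b : Fin 2 => mu (Fin.castLE hDP b)
        set nu' := fun b : Fin 2 => nu (Fin.castLE hDP b)
        rw [sum_comps_pad hDP _ (fun m _ hm => by
          simp [hα0 i m hm])]
        have hterm : ∀ lam : Fin 2 → ℕ,
            (qklCoeff DP n t (pad hDP lam) (pad hDP mu') (pad hDP nu') : ℂ) *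
              (starRingEnd ℂ) (α i (pad hDP lam)) *
              α j (fun k => pad hDP lam k - pad hDP mu' k + pad hDP nu' k)
            = (qklCoeff 2 n t lam mu' nu' : ℂ) * (starRingEnd ℂ) (γ i lam) *
              γ j (fun b => lam b - mu' b + nu' b) := by
          intro lam
          rw [qklCoeff_pad hDP, hα, pad_sub_add hDP, hα]
        rw [Finset.sum_congr rfl fun lam _ => hterm lam]
        exact h2 i j hij mu' (mem_comps_of_pad_mem hDP hmu) nu' (mem_comps_of_pad_mem hDP hnu)
      · -- nu has support beyond first two levels: every term vanishes
        refine Finset.sum_eq_zero fun m hm => ?_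
        by_cases hms : ∀ k : Fin DP, 2 ≤ (k : ℕ) → m k = 0
        · push_neg at hnus
          obtain ⟨k, hk2, hknz⟩ := hnus
          have : α j (fun k => m k - mu k + nu k) = 0 := by
            refine hα0 j _ fun h => hknz ?_
            have := h k hk2
            rw [hms k hk2, hmus k hk2] at this
            simpa using this
          simp [this]
        · simp [hα0 i m hms]
    · -- mu has support beyond first two levels
      refine Finset.sum_eq_zero fun m hm => ?_
      by_cases hms : ∀ k : Fin DP, 2 ≤ (k : ℕ) → m k = 0
      · push_neg at hmus
        obtain ⟨k, hk2, hknz⟩ := hmus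
        have : qklCoeff DP n t m mu nu = 0 := by
          unfold qklCoeff
          refine if_neg fun h => hknz ?_
          have := h k
          rw [hms k hk2] at this
          exact Nat.le_zero.mp this
        simp [this]
      · simp [hα0 i m hms]
  · -- C3
    intro i j mu hmu nu hnu
    by_cases hmus : ∀ k : Fin DP, 2 ≤ (k : ℕ) → mu k = 0
    · by_cases hnus : ∀ k : Fin DP, 2 ≤ (k : ℕ) → nu k = 0
      · rw [supp_eq_pad hDP mu hmus] at hmu ⊢
        rw [supp_eq_pad hDP nu hnus] at hnu ⊢
        set mu' := fun b : Fin 2 => mu (Fin.castLE hDP b)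
        set nu' := fun b : Fin 2 => nu (Fin.castLE hDP b)
        rw [sum_comps_pad hDP _ (fun m _ hm => by
          simp [hα0 i m hm, hα0 j m hm])]
        have hterm : ∀ lam : Fin 2 → ℕ,
            (qklCoeff DP n t (pad hDP lam) (pad hDP mu') (pad hDP nu') : ℂ) *
              ((starRingEnd ℂ) (α i (pad hDP lam)) *
                α i (fun k => pad hDP lam k - pad hDP mu' k + pad hDP nu' k) -
               (starRingEnd ℂ) (α j (pad hDP lam)) *
                α j (fun k => pad hDP lam k - pad hDP mu' k + pad hDP nu' k))
            = (qklCoeff 2 n t lam mu' nu' : ℂ) *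
              ((starRingEnd ℂ) (γ i lam) * γ i (fun b => lam b - mu' b + nu' b) -
               (starRingEnd ℂ) (γ j lam) * γ j (fun b => lam b - mu' b + nu' b)) := by
          intro lam
          rw [qklCoeff_pad hDP, hα, hα, pad_sub_add hDP, hα, hα]
        rw [Finset.sum_congr rfl fun lam _ => hterm lam]
        exact h3 i j mu' (mem_comps_of_pad_mem hDP hmu) nu' (mem_comps_of_pad_mem hDP hnu)
      · refine Finset.sum_eq_zero fun m hm => ?_
        by_cases hms : ∀ k : Fin DP, 2 ≤ (k : ℕ) → m k = 0
        · push_neg at hnus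
          obtain ⟨k, hk2, hknz⟩ := hnus
          have hz : ∀ l : Fin DL, α l (fun k => m k - mu k + nu k) = 0 := by
            intro l
            refine hα0 l _ fun h => hknz ?_
            have := h k hk2
            rw [hms k hk2, hmus k hk2] at this
            simpa using this
          simp [hz i, hz j]
        · simp [hα0 i m hms, hα0 j m hms]
    · refine Finset.sum_eq_zero fun m hm => ?_
      by_cases hms : ∀ k : Fin DP, 2 ≤ (k : ℕ) → m k = 0
      · push_neg at hmus
        obtain ⟨k, hk2, hknz⟩ := hmus
        have : qklCoeff DP n t m mu nu = 0 := by
          unfold qklCoeff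
          refine if_neg fun h => hknz ?_
          have := h k
          rw [hms k hk2] at this
          exact Nat.le_zero.mp this
        simp [this]
      · simp [hα0 i m hms, hα0 j m hms]
end

section
/- For the simplicial qudit PI code construction with codewords |c_i⟩ = Σ_{j=0}^{D_P−1} ω^{ij} Σ_{l ≡ i+j mod D_P, l ∈ ℛ} f(l) |D^n_{λ^{g l j}}⟩, the codewords have disjoint support: for all i ≠ j in [D_L] and all compositions λ of n, ᾱ_{i,λ} α_{j,λ} = 0, where α_{i,λ} are the coefficients of |c_i⟩ in the Dicke basis. In particular ⟨c_i|c_j⟩ = 0 for i ≠ j. -/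
/-- The composition `λ^{g l j}` of `n` into `q+1` parts obtained by inserting
the entry `n − g·Σ_k l_k` at position `j` into the scaled vector `g·l`. -/
def lamOf (q n g : ℕ) (j : Fin (q + 1)) (l : Fin q → ℕ) : Fin (q + 1) → ℕ :=
  j.insertNth (n - g * ∑ k, l k) (fun k => g * l k)

/-- The coefficient `α_{i,λ}` of the simplicial codeword
`|c_i⟩ = Σ_j ω^{ij} Σ_{l ≡ i+j mod (q+1), l ∈ ℛ} f(l) |D^n_{λ^{g l j}}⟩`
on the Dicke state `|D^n_λ⟩`, where `ω = e^{2πi/(q+1)}` and the physical local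
dimension is `D_P = q + 1`. -/
noncomputable def alphaC (q n g DL : ℕ) (R : Finset (Fin q → ℕ)) (f : (Fin q → ℕ) → ℂ)
    (i : Fin DL) (lam : Fin (q + 1) → ℕ) : ℂ :=
  ∑ j : Fin (q + 1),
    (Complex.exp (2 * (Real.pi : ℂ) * Complex.I / ((q : ℂ) + 1))) ^ ((i : ℕ) * (j : ℕ)) *
      ∑ l ∈ R.filter (fun l => ∀ k, l k % (q + 1) = ((i : ℕ) + (j : ℕ)) % (q + 1)),
        f l * (if lam = lamOf q n g j l then 1 else 0)

lemma alphaC_exists {q n g DL : ℕ} {R : Finset (Fin q → ℕ)} {f : (Fin q → ℕ) → ℂ}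
    {i : Fin DL} {lam : Fin (q + 1) → ℕ}
    (h : alphaC q n g DL R f i lam ≠ 0) :
    ∃ j : Fin (q + 1), ∃ l, l ∈ R ∧
      (∀ k, l k % (q + 1) = ((i : ℕ) + (j : ℕ)) % (q + 1)) ∧ lam = lamOf q n g j l := by
  obtain ⟨j, _, hj⟩ := Finset.exists_ne_zero_of_sum_ne_zero h
  have h2 : (∑ l ∈ R.filter (fun l => ∀ k, l k % (q + 1) = ((i : ℕ) + (j : ℕ)) % (q + 1)),
      f l * (if lam = lamOf q n g j l then 1 else 0)) ≠ 0 := by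
    intro h0; exact hj (by rw [h0, mul_zero])
  obtain ⟨l, hl, hl2⟩ := Finset.exists_ne_zero_of_sum_ne_zero h2
  rw [Finset.mem_filter] at hl
  refine ⟨j, l, hl.1, hl.2, ?_⟩
  by_contra hne
  rw [if_neg hne, mul_zero] at hl2
  exact hl2 rfl


open Finset

/-- the simplicial qudit PI codewords have disjoint support:
for `i ≠ j`, `ᾱ_{i,λ} α_{j,λ} = 0` for every composition `λ`, and in particular
`⟨c_i|c_j⟩ = 0`. -/
theorem simplicial_disjoint_support (q n g b δ t DL : ℕ)
    (hq : 2 ≤ q) (hDL : DL ≤ q + 1)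
    (R : Finset (Fin q → ℕ)) (f : (Fin q → ℕ) → ℂ)
    (hn : n = g * b + δ + 1) (hδ : 2 * t ≤ δ) (hg : 2 * t ≤ g) (hg1 : 1 ≤ g)
    (hR : ∀ l ∈ R, ∀ l' ∈ R, ∀ k : Fin q, (∑ m, l m) + l' k ≤ b) :
    ∀ i j : Fin DL, i ≠ j →
      (∀ lam : Fin (q + 1) → ℕ,
        (starRingEnd ℂ) (alphaC q n g DL R f i lam) * alphaC q n g DL R f j lam = 0)
      ∧ ∑ lam ∈ ((Fintype.piFinset fun _ : Fin (q + 1) => Finset.range (n + 1)).filter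
            fun lam => ∑ m, lam m = n),
          (starRingEnd ℂ) (alphaC q n g DL R f i lam) * alphaC q n g DL R f j lam = 0 := by
  intro i j hij
  have hzero : ∀ lam : Fin (q + 1) → ℕ,
      (starRingEnd ℂ) (alphaC q n g DL R f i lam) * alphaC q n g DL R f j lam = 0 := by
    intro lam
    by_contra h
    have hi : alphaC q n g DL R f i lam ≠ 0 := by
      intro h0; exact h (by rw [h0, map_zero, zero_mul])
    have hj : alphaC q n g DL R f j lam ≠ 0 := by
      intro h0; exact h (by rw [h0, mul_zero])
    obtain ⟨ji, li, hli, hmi, heqi⟩ := alphaC_exists hi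
    obtain ⟨jj, lj, hlj, hmj, heqj⟩ := alphaC_exists hj
    have heq : lamOf q n g ji li = lamOf q n g jj lj := heqi.symm.trans heqj
    by_cases hjj : ji = jj
    · -- same insertion position: the l's agree, hence i = j, contradiction
      subst hjj
      have k0 : Fin q := ⟨0, by omega⟩
      have hval : g * li k0 = g * lj k0 := by
        have := congrFun heq (ji.succAbove k0)
        simpa [lamOf, Fin.insertNth_apply_succAbove] using this
      have hlk : li k0 = lj k0 := Nat.eq_of_mul_eq_mul_left (by omega) hval
      have hmod : ((i : ℕ) + (ji : ℕ)) % (q + 1) = ((j : ℕ) + (ji : ℕ)) % (q + 1) := by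
        rw [← hmi k0, hlk, hmj k0]
      have hcan : (i : ℕ) % (q + 1) = (j : ℕ) % (q + 1) :=
        Nat.ModEq.add_right_cancel' (ji : ℕ) hmod
      have hi1 : (i : ℕ) < q + 1 := lt_of_lt_of_le i.isLt hDL
      have hj1 : (j : ℕ) < q + 1 := lt_of_lt_of_le j.isLt hDL
      rw [Nat.mod_eq_of_lt hi1, Nat.mod_eq_of_lt hj1] at hcan
      exact hij (Fin.ext hcan)
    · -- different positions: the special entry equals a regular entry, impossible
      obtain ⟨k, hk⟩ := Fin.exists_succAbove_eq (show ji ≠ jj from hjj)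
      have h1 : lamOf q n g ji li ji = n - g * ∑ m, li m := by
        simp [lamOf, Fin.insertNth_apply_same]
      have h2 : lamOf q n g jj lj ji = g * lj k := by
        rw [← hk]
        simp [lamOf, Fin.insertNth_apply_succAbove]
      have h3 : n - g * ∑ m, li m = g * lj k := by rw [← h1, heq, h2]
      have h4 : g * ((∑ m, li m) + lj k) ≤ g * b :=
        Nat.mul_le_mul_left g (hR li hli lj hlj k)
      rw [mul_add] at h4
      omega
  exact ⟨hzero, Finset.sum_eq_zero fun lam _ => hzero lam⟩
end
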